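/- For all vectors x, y in ℝ^N and every real γ ≥ 1, one has (|x|^{2γ-2} x - |y|^{2γ-2} y) · (x - y) ≥ (1 / 2^{2γ-1}) |x - y|^{2γ}. -/

import Mathlib

open Real

theorem stmt_0 (N : ℕ) (x y : EuclideanSpace ℝ (Fin N)) (γ : ℝ) (hγ : 1 ≤ γ) :
    (inner ℝ ((‖x‖ ^ (2 * γ - 2) : ℝ) • x - (‖y‖ ^ (2 * γ - 2) : ℝ) • y) (x - y) : ℝ) ≥
      (1 / 2 ^ (2 * γ - 1)) * ‖x - y‖ ^ (2 * γ) := by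
  set s : ℝ := 2 * γ - 2 with hs_def
  have hs : 0 ≤ s := by rw [hs_def]; linarith
  set a := ‖x‖ with ha_def
  set b := ‖y‖ with hb_def
  set c := ‖x - y‖ with hc_def
  have ha : 0 ≤ a := norm_nonneg x
  have hb : 0 ≤ b := norm_nonneg y
  have hc : 0 ≤ c := norm_nonneg _
  have has : (0:ℝ) ≤ a ^ s := rpow_nonneg ha s
  have hbs : (0:ℝ) ≤ b ^ s := rpow_nonneg hb s
  have hLHS : (inner ℝ ((a ^ s : ℝ) • x - (b ^ s : ℝ) • y) (x - y) : ℝ)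
      = a ^ s * a ^ 2 + b ^ s * b ^ 2 - (a ^ s + b ^ s) * (inner ℝ x y : ℝ) := by
    simp only [inner_sub_left, inner_sub_right, real_inner_smul_left,
      real_inner_self_eq_norm_sq, real_inner_comm y x, ← ha_def, ← hb_def]
    ring
  have hc2 : c ^ 2 = a ^ 2 + b ^ 2 - 2 * (inner ℝ x y : ℝ) := by
    rw [hc_def, ha_def, hb_def, norm_sub_sq_real]; ring
  have hmono : 0 ≤ (a ^ s - b ^ s) * (a ^ 2 - b ^ 2) := by
    rcases le_total a b with h | h
    · have h1 : a ^ s ≤ b ^ s := rpow_le_rpow ha h hs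
      have h2 : a ^ 2 ≤ b ^ 2 := by nlinarith
      nlinarith
    · have h1 : b ^ s ≤ a ^ s := rpow_le_rpow hb h hs
      have h2 : b ^ 2 ≤ a ^ 2 := by nlinarith
      nlinarith
  have step1 : (inner ℝ ((a ^ s : ℝ) • x - (b ^ s : ℝ) • y) (x - y) : ℝ)
      ≥ (1/2) * (a ^ s + b ^ s) * c ^ 2 := by
    rw [hLHS, hc2]; nlinarith [hmono]
  have key : c ^ s ≤ 2 ^ s * (a ^ s + b ^ s) := by
    have h1 : c ≤ a + b := norm_sub_le x y
    have h2 : c ^ s ≤ (a + b) ^ s := rpow_le_rpow hc h1 hs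
    have h3 : (a + b) ^ s ≤ (2 * max a b) ^ s := by
      apply rpow_le_rpow (by linarith) _ hs
      rcases le_total a b with h | h
      · rw [max_eq_right h]; linarith
      · rw [max_eq_left h]; linarith
    have h4 : (2 * max a b) ^ s = 2 ^ s * (max a b) ^ s :=
      mul_rpow (by norm_num) (le_max_iff.mpr (Or.inl ha))
    have h5 : (max a b) ^ s ≤ a ^ s + b ^ s := by
      rcases le_total a b with h | h
      · rw [max_eq_right h]; linarith
      · rw [max_eq_left h]; linarith
    have h6 : (0:ℝ) ≤ (2:ℝ) ^ s := rpow_nonneg (by norm_num) s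
    calc c ^ s ≤ (a+b) ^ s := h2
      _ ≤ (2 * max a b) ^ s := h3
      _ = 2 ^ s * (max a b) ^ s := h4
      _ ≤ 2 ^ s * (a ^ s + b ^ s) := by nlinarith
  have h2pow : (2:ℝ) ^ (2*γ-1) = 2 * 2 ^ s := by
    rw [hs_def, show 2*γ-1 = 1 + (2*γ-2) by ring, rpow_add (by norm_num), rpow_one]
  rcases eq_or_lt_of_le hc with hc0 | hc0
  · have hxy : x = y := by
      rw [← sub_eq_zero]
      exact norm_eq_zero.mp hc0.symm
    have hab : a = b := by rw [ha_def, hb_def, hxy]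
    have h2γ : (2*γ : ℝ) ≠ 0 := by positivity
    rw [show c = 0 from hc0.symm, Real.zero_rpow h2γ, mul_zero]
    subst hxy
    rw [hab, sub_self, sub_self, inner_zero_left]
  · have step2 : (1/2) * (a ^ s + b ^ s) * c ^ 2
        ≥ (1 / 2 ^ (2*γ-1)) * c ^ (2*γ) := by
      have hcexp : c ^ (2*γ) = c ^ s * c ^ 2 := by
        rw [show (2*γ:ℝ) = s + 2 by rw [hs_def]; ring, rpow_add hc0,
          show ((2:ℝ)) = ((2:ℕ):ℝ) by norm_num, rpow_natCast]
      rw [hcexp, h2pow]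
      have h2s : (0:ℝ) < (2:ℝ) ^ s := rpow_pos_of_pos (by norm_num) s
      rw [ge_iff_le, div_mul_eq_mul_div, div_le_iff₀ (by positivity)]
      have hcc : (0:ℝ) ≤ c ^ 2 := sq_nonneg c
      nlinarith [mul_le_mul_of_nonneg_right key hcc]
    calc (inner ℝ ((a ^ s : ℝ) • x - (b ^ s : ℝ) • y) (x - y) : ℝ)
        ≥ (1/2) * (a ^ s + b ^ s) * c ^ 2 := step1
      _ ≥ (1 / 2 ^ (2*γ-1)) * c ^ (2*γ) := step2
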